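/- Let κ_n, κ_t, κ_H, σ_y, G_Ic > 0 with σ_y ≤ √(2κ_t·G_Ic), and let φ ∈ [arcsin(σ_y/√(2κ_t·G_Ic)), π/2]. Set ⟦u⟧_n = √(2G_Ic/κ_n)·cos φ, ⟦u⟧_t = √(2G_Ic/κ_t)·((κ_t+κ_H)/κ_H)·sin φ − σ_y/κ_H, and π = (κ_t/(κ_t+κ_H))·(⟦u⟧_t − σ_y/κ_t). Then π ≥ 0, and the total energy release rate G = κ_n·⟦u⟧_n²/2 + κ_t·(⟦u⟧_t − π)²/2 + σ_y·|π| + κ_H·π²/2 equals G_c(φ) = G_Ic·(1 + (κ_t/κ_H)·sin² φ) − σ_y²/(2κ_H). -/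

import Mathlib

/-- On the plastic branch `φ ∈ [arcsin(σy/√(2κt·G_Ic)), π/2]`, the plastic slip
`pl` at damage initiation is nonnegative and the total energy release rate
`κn·un²/2 + κt·(ut−pl)²/2 + σy·|pl| + κH·pl²/2` equals
`G_c(φ) = G_Ic·(1 + (κt/κH)·sin²φ) − σy²/(2κH)`. -/
theorem stmt_6 (κn κt κH σy GIc φ : ℝ) (hκn : 0 < κn) (hκt : 0 < κt) (hκH : 0 < κH)
    (hσy : 0 < σy) (hG : 0 < GIc) (hub : σy ≤ Real.sqrt (2 * κt * GIc))
    (hφ : φ ∈ Set.Icc (Real.arcsin (σy / Real.sqrt (2 * κt * GIc))) (Real.pi / 2)) :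
    let un := Real.sqrt (2 * GIc / κn) * Real.cos φ
    let ut := Real.sqrt (2 * GIc / κt) * ((κt + κH) / κH) * Real.sin φ - σy / κH
    let pl := κt / (κt + κH) * (ut - σy / κt)
    0 ≤ pl ∧
      κn * un ^ 2 / 2 + κt * (ut - pl) ^ 2 / 2 + σy * |pl| + κH * pl ^ 2 / 2
        = GIc * (1 + (κt / κH) * Real.sin φ ^ 2) - σy ^ 2 / (2 * κH) := by
  intro un ut pl
  set S := Real.sqrt (2 * κt * GIc) with hS
  set a := Real.sqrt (2 * GIc / κt) with ha
  set b := Real.sqrt (2 * GIc / κn) with hb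
  have hSpos : 0 < S := Real.sqrt_pos.mpr (by positivity)
  have ha2 : a ^ 2 = 2 * GIc / κt := Real.sq_sqrt (by positivity)
  have hb2 : b ^ 2 = 2 * GIc / κn := Real.sq_sqrt (by positivity)
  have hSa : S = κt * a := by
    rw [hS, ha, show 2 * κt * GIc = κt ^ 2 * (2 * GIc / κt) by field_simp,
      Real.sqrt_mul (sq_nonneg _), Real.sqrt_sq hκt.le]
  -- sin φ ≥ σy / S
  have hmem : σy / S ∈ Set.Icc (-1 : ℝ) 1 := by
    constructor
    · have : 0 ≤ σy / S := div_nonneg hσy.le hSpos.le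
      linarith
    · exact (div_le_one hSpos).mpr hub
  have hymem : φ ∈ Set.Icc (-(Real.pi / 2)) (Real.pi / 2) := by
    refine ⟨le_trans ?_ hφ.1, hφ.2⟩
    exact Real.neg_pi_div_two_le_arcsin _
  have hsin : σy / S ≤ Real.sin φ :=
    (Real.arcsin_le_iff_le_sin hmem hymem).mp hφ.1
  have hsin' : σy ≤ κt * a * Real.sin φ := by
    rw [← hSa]
    calc σy = σy / S * S := by field_simp
    _ ≤ Real.sin φ * S := by
        apply mul_le_mul_of_nonneg_right hsin hSpos.le
    _ = S * Real.sin φ := mul_comm _ _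
  have hκtH : κt + κH ≠ 0 := by positivity
  have hpl : pl = (κt * a * Real.sin φ - σy) / κH := by
    show κt / (κt + κH) * (ut - σy / κt) = _
    show κt / (κt + κH) * ((a * ((κt + κH) / κH) * Real.sin φ - σy / κH) - σy / κt) = _
    field_simp
    ring
  have hplnn : 0 ≤ pl := by
    rw [hpl]
    apply div_nonneg (by linarith) hκH.le
  have hut : ut - pl = a * Real.sin φ := by
    rw [hpl]
    show (a * ((κt + κH) / κH) * Real.sin φ - σy / κH) - _ = _
    field_simp
    ring
  refine ⟨hplnn, ?_⟩
  rw [abs_of_nonneg hplnn, hut, hpl]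
  have hun : un = b * Real.cos φ := rfl
  rw [hun]
  have hpyth : Real.sin φ ^ 2 + Real.cos φ ^ 2 = 1 := Real.sin_sq_add_cos_sq φ
  have hκnb : κn * b ^ 2 = 2 * GIc := by rw [hb2]; field_simp
  have hκta : κt * a ^ 2 = 2 * GIc := by rw [ha2]; field_simp
  field_simp
  linear_combination (κH * Real.cos φ ^ 2) * hκnb + ((κH + κt) * Real.sin φ ^ 2) * hκta + (2 * GIc * κH) * hpyth
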